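/- Let N ≥ 1 be an integer, P ≥ 1 squarefree, and define c = gcd(N·P, 6)/gcd(N, 6). If n is an integer with 1 ≤ n ≤ P and (N−n)(N+n) coprime to P, then c divides n. -/

import Mathlib

lemma aux_stmt3 (p N P n : ℕ) (hp : p.Prime)
    (hNp : ¬ p ∣ N) (hPp : p ∣ P)
    (hcop : Int.gcd (((N : ℤ) - (n : ℤ)) * ((N : ℤ) + (n : ℤ))) (P : ℤ) = 1)
    (hzmod : ∀ a b : ZMod p, a ≠ 0 → (a - b) * (a + b) ≠ 0 → b = 0) : p ∣ n := by
  haveI : NeZero p := ⟨hp.ne_zero⟩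
  have hnd : ¬ (p : ℤ) ∣ ((N : ℤ) - n) * ((N : ℤ) + n) := by
    intro h
    have hpg : (p : ℤ) ∣ (Int.gcd (((N : ℤ) - n) * ((N : ℤ) + n)) (P : ℤ) : ℤ) :=
      Int.dvd_coe_gcd h (by exact_mod_cast Int.natCast_dvd_natCast.mpr hPp)
    rw [hcop] at hpg
    have := Int.le_of_dvd one_pos hpg
    have := hp.one_lt
    omega
  have hN0 : ((N : ℤ) : ZMod p) ≠ 0 := by
    intro h
    exact hNp (by exact_mod_cast (ZMod.intCast_zmod_eq_zero_iff_dvd _ p).mp h)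
  have hprod : ((((N : ℤ) - n) * ((N : ℤ) + n) : ℤ) : ZMod p) ≠ 0 := by
    intro h
    exact hnd ((ZMod.intCast_zmod_eq_zero_iff_dvd _ p).mp h)
  push_cast at hprod hN0
  have := hzmod (N : ZMod p) (n : ZMod p) hN0 hprod
  exact (ZMod.natCast_eq_zero_iff n p).mp this

theorem stmt_3 (N P : ℕ) (hN : 1 ≤ N) (hP : 1 ≤ P) (hsq : Squarefree P)
    (c : ℕ) (hc : c = Nat.gcd (N * P) 6 / Nat.gcd N 6)
    (n : ℕ) (hn1 : 1 ≤ n) (hnP : n ≤ P)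
    (hcop : Int.gcd (((N : ℤ) - (n : ℤ)) * ((N : ℤ) + (n : ℤ))) (P : ℤ) = 1) :
    c ∣ n := by
  have hgd : Nat.gcd N 6 ∣ Nat.gcd (N * P) 6 :=
    Nat.dvd_gcd ((Nat.gcd_dvd_left N 6).trans (dvd_mul_right N P)) (Nat.gcd_dvd_right N 6)
  have hmul : c * Nat.gcd N 6 = Nat.gcd (N * P) 6 := by
    rw [hc]; exact Nat.div_mul_cancel hgd
  have hc6 : c ∣ 6 := by
    have h1 : c * Nat.gcd N 6 ∣ 6 := hmul ▸ Nat.gcd_dvd_right (N * P) 6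
    exact (dvd_mul_right c (Nat.gcd N 6)).trans h1
  have key : ∀ p : ℕ, p.Prime → p ∣ 6 → ¬ p * p ∣ 6 →
      (∀ a b : ZMod p, a ≠ 0 → (a - b) * (a + b) ≠ 0 → b = 0) → p ∣ c → p ∣ n := by
    intro p hp hp6 hpp hz hpc
    have hNp : ¬ p ∣ N := by
      intro hpN
      have hpg : p ∣ Nat.gcd N 6 := Nat.dvd_gcd hpN hp6
      have : p * p ∣ 6 := by
        have : p * p ∣ c * Nat.gcd N 6 := mul_dvd_mul hpc hpg
        rw [hmul] at this
        exact this.trans (Nat.gcd_dvd_right (N * P) 6)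
      exact hpp this
    have hPp : p ∣ P := by
      have : p ∣ N * P := hpc.trans ((hmul ▸ (dvd_mul_right c (Nat.gcd N 6))).trans
        (Nat.gcd_dvd_left (N * P) 6))
      rcases (hp.dvd_mul.mp this) with h | h
      · exact absurd h hNp
      · exact h
    exact aux_stmt3 p N P n hp hNp hPp hcop hz
  have key2 : 2 ∣ c → 2 ∣ n := key 2 Nat.prime_two (by norm_num) (by norm_num) (by decide)
  have key3 : 3 ∣ c → 3 ∣ n := key 3 Nat.prime_three (by norm_num) (by norm_num) (by decide)
  have hle : c ≤ 6 := Nat.le_of_dvd (by norm_num) hc6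
  interval_cases c
  · exact absurd hc6 (by decide)
  · exact one_dvd n
  · exact key2 dvd_rfl
  · exact key3 dvd_rfl
  · exact absurd hc6 (by decide)
  · exact absurd hc6 (by decide)
  · exact (Nat.Coprime.mul_dvd_of_dvd_of_dvd (by decide) (key2 ⟨3, rfl⟩) (key3 ⟨2, rfl⟩) : 6 ∣ n)
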